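/- Every W ∈ SU(2) whose diagonal entries are real admits a square root B ∈ SU(2) whose diagonal entries are also real, i.e., B² = W. -/

import Mathlib

theorem su2_real_diag_sqrt (W : Matrix (Fin 2) (Fin 2) ℂ)
    (hW : W ∈ Matrix.unitaryGroup (Fin 2) ℂ) (hdet : W.det = 1)
    (h00 : (W 0 0).im = 0) (h11 : (W 1 1).im = 0) :
    ∃ B : Matrix (Fin 2) (Fin 2) ℂ,
      B ∈ Matrix.unitaryGroup (Fin 2) ℂ ∧ B.det = 1 ∧
      (B 0 0).im = 0 ∧ (B 1 1).im = 0 ∧ B * B = W := by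
  have h1 : star W * W = 1 := hW.1
  have h2 : W * star W = 1 := hW.2
  have hstar : star W = W.adjugate := by
    have hinv : W⁻¹ = star W := Matrix.inv_eq_left_inv h1
    rw [← hinv, Matrix.inv_def, hdet, Ring.inverse_one, one_smul]
  have e1 : (starRingEnd ℂ) (W 0 0) = W 1 1 := by
    have := congrFun (congrFun hstar 0) 0
    simpa [Matrix.adjugate_fin_two, Matrix.star_apply] using this
  have e2 : (starRingEnd ℂ) (W 1 0) = -(W 0 1) := by
    have := congrFun (congrFun hstar 0) 1
    simpa [Matrix.adjugate_fin_two, Matrix.star_apply] using this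
  set a : ℝ := (W 0 0).re with ha
  set b : ℂ := W 1 0 with hbdef
  have hW00 : W 0 0 = (a : ℂ) := by
    apply Complex.ext <;> simp [h00, ha]
  have hW11 : W 1 1 = (a : ℂ) := by
    rw [← e1, hW00, Complex.conj_ofReal]
  have hW01 : W 0 1 = -((starRingEnd ℂ) b) := by
    rw [e2, neg_neg]
  have hnorm : W 0 0 * (starRingEnd ℂ) (W 0 0) + W 0 1 * (starRingEnd ℂ) (W 0 1) = 1 := by
    have := congrFun (congrFun h2 0) 0
    simpa [Matrix.mul_apply, Fin.sum_univ_two, Matrix.star_apply, Matrix.one_apply] using this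
  have hb : (starRingEnd ℂ) b * b = 1 - (a:ℂ) * (a:ℂ) := by
    rw [hW00, hW01] at hnorm
    simp only [map_neg, RingHom.map_mul, Complex.conj_conj, Complex.conj_ofReal] at hnorm
    linear_combination hnorm
  have hre : a * a + Complex.normSq b = 1 := by
    have : ((a * a + Complex.normSq b : ℝ) : ℂ) = 1 := by
      push_cast
      rw [← Complex.normSq_eq_conj_mul_self] at hb
      linear_combination hb
    exact_mod_cast this
  by_cases hane : 1 + a = 0
  · -- a = -1, b = 0, W = -1
    have hb0 : b = 0 := by
      have : Complex.normSq b = 0 := by nlinarith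
      exact Complex.normSq_eq_zero.mp this
    have hW10 : W 1 0 = 0 := by rw [← hbdef]; exact hb0
    have hW01' : W 0 1 = 0 := by rw [hW01, hb0]; simp
    have haval : (a:ℂ) = -1 := by
      have : a = -1 := by linarith
      rw [this]; push_cast; ring
    have hWeq : W = !![(-1:ℂ), 0; 0, -1] := by
      rw [Matrix.eta_fin_two W, hW00, hW11, hW01', hW10, haval]
    refine ⟨!![0, -1; 1, 0], ?_, ?_, ?_, ?_, ?_⟩
    · rw [Matrix.mem_unitaryGroup_iff]
      ext i j
      fin_cases i <;> fin_cases j <;>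
        simp [Matrix.mul_apply, Fin.sum_univ_two, Matrix.star_apply, Matrix.one_apply]
    · simp [Matrix.det_fin_two_of]
    · simp
    · simp
    · rw [hWeq, Matrix.mul_fin_two]
      ext i j
      fin_cases i <;> fin_cases j <;> norm_num
  · have hage : -1 ≤ a := by nlinarith [Complex.normSq_nonneg b]
    have hapos : 0 < 1 + a := lt_of_le_of_ne (by linarith) (fun h => hane h.symm)
    set c : ℝ := Real.sqrt ((1 + a) / 2) with hcdef
    have hcpos : 0 < c := Real.sqrt_pos.mpr (by linarith)
    have hc2 : c * c = (1 + a) / 2 := Real.mul_self_sqrt (by linarith)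
    set cc : ℂ := (c : ℂ) with hccdef
    have hccne : cc ≠ 0 := by
      simp [hccdef, Complex.ofReal_ne_zero, ne_of_gt hcpos]
    have hccsq : cc * cc = (1 + (a:ℂ)) / 2 := by
      rw [hccdef, ← Complex.ofReal_mul, hc2]; push_cast; ring
    have h1ac : 1 + (a:ℂ) ≠ 0 := by
      intro h; apply hane; exact_mod_cast h
    set d : ℂ := b / (2 * cc) with hddef
    have hdconj : (starRingEnd ℂ) d = (starRingEnd ℂ) b / (2 * cc) := by
      rw [hddef, map_div₀, map_mul, map_ofNat, hccdef, Complex.conj_ofReal]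
    have hd : (starRingEnd ℂ) d * d = (1 - (a:ℂ)) / 2 := by
      rw [hdconj, hddef, div_mul_div_comm, hb,
        show (2 * cc) * (2 * cc) = 4 * (cc * cc) by ring, hccsq]
      field_simp
      ring
    have hstarB : star !![cc, -((starRingEnd ℂ) d); d, cc]
        = !![cc, (starRingEnd ℂ) d; -d, cc] := by
      ext i j
      fin_cases i <;> fin_cases j <;>
        simp [Matrix.star_apply, Complex.conj_ofReal, hccdef]
    refine ⟨!![cc, -((starRingEnd ℂ) d); d, cc], ?_, ?_, ?_, ?_, ?_⟩
    · rw [Matrix.mem_unitaryGroup_iff, hstarB, Matrix.mul_fin_two, Matrix.one_fin_two]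
      ext i j
      fin_cases i <;> fin_cases j <;>
        simp only [Fin.mk_zero, Fin.mk_one, Matrix.cons_val', Matrix.cons_val_zero,
          Matrix.cons_val_one, Matrix.head_cons, Matrix.empty_val', Matrix.cons_val_fin_one,
          Matrix.head_fin_const, Matrix.of_apply]
      · linear_combination hccsq + hd
      · ring
      · ring
      · linear_combination hd + hccsq
    · rw [Matrix.det_fin_two_of]
      linear_combination hccsq + hd
    · simp [hccdef]
    · simp [hccdef]
    · have hWeq : W = !![(a:ℂ), -((starRingEnd ℂ) b); b, (a:ℂ)] := by
        rw [Matrix.eta_fin_two W, hW00, hW11, hW01, ← hbdef]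
      rw [hWeq, Matrix.mul_fin_two]
      ext i j
      fin_cases i <;> fin_cases j <;>
        simp only [Fin.mk_zero, Fin.mk_one, Matrix.cons_val', Matrix.cons_val_zero,
          Matrix.cons_val_one, Matrix.head_cons, Matrix.empty_val', Matrix.cons_val_fin_one,
          Matrix.head_fin_const, Matrix.of_apply]
      · linear_combination hccsq - hd
      · rw [hdconj]; field_simp; ring
      · rw [hddef]; field_simp; ring
      · linear_combination hccsq - hd
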